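/- Let p be an odd prime, G a cyclic group of order p^n with fixed generator σ, and H_t the subgroup generated by σ^{p^t}. Fix nonnegative integers m_0,…,m_n and index pairs (t,j) with 0 ≤ t ≤ n, 1 ≤ j ≤ m_t. Let A = ⊕_{(u,k)} ℤ_p[G/H_u]·P_{(u,k)} and B = ⊕_{(t,j)} ℤ_p[G/H_t]·P^t_{(t,j)} be ℤ_p[G]-modules given as direct sums of free rank-one modules on the indicated generators (so P_{(u,k)} is H_u-fixed and P^t_{(t,j)} is H_t-fixed), and let ⟨·,·⟩: A × B → ℂ_p be a ℤ_p-bilinear G-invariant pairing (⟨γa,γb⟩ = ⟨a,b⟩ for γ ∈ G). Define matrices over ℂ_p[G], indexed by the pairs above: R with entries R_{(u,k),(t,j)} := (1/|H_u|) Σ_{τ ∈ G/H_u} ⟨τ·P_{(u,k)}, P^t_{(t,j)}⟩ · τ e_{H_u}; let Φ = (Φ_{(t,j),(s,i)}) be any matrix with entries in ℤ_p[G]; and let Λ have entries Λ_{(u,k),(s,i)} := (1/|H_s|) Σ_{(t,j)} Φ_{(t,j),(s,i)} · ( Σ_{τ ∈ G/H_u} ⟨τ·P_{(u,k)}, P^t_{(t,j)}⟩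 · τ e_{H_u} ) + [(u,k) = (s,i)]·(σ^{p^s} − 1), where e_{H_u} := |H_u|^{−1}Σ_{h∈H_u}h. Then for every character ψ: G → ℂ_p^× (with t_ψ defined by ker(ψ) = H_{t_ψ}) one has det(ψ(Λ)) = det(ψ(R_{t_ψ})) · det(ψ(Φ_{t_ψ})) · ∏_{s=0}^{t_ψ−1} (ψ(σ^{p^s}) − 1)^{m_s}. -/

import Mathlib

open scoped Classical

private lemma sum_eq_zero_of_twist {X K : Type*} [Fintype X] [Field K]
    (e : Equiv.Perm X) (c : K) (hc : c ≠ 1) (f : X → K)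
    (hf : ∀ x, f (e x) = c * f x) : ∑ x, f x = 0 := by
  have h1 : ∑ x, f (e x) = ∑ x, f x := Equiv.sum_comp e f
  have h2 : c * ∑ x, f x = 1 * ∑ x, f x := by
    rw [Finset.mul_sum, ← h1, one_mul]
    exact Finset.sum_congr rfl fun x _ => (hf x).symm
  by_contra h
  exact hc (mul_right_cancel₀ h h2)


/-- Index pairs `(t, j)` with `0 ≤ t ≤ n` and `1 ≤ j ≤ m t`. -/
abbrev Idx (n : ℕ) (m : Fin (n + 1) → ℕ) : Type :=
  Σ t : Fin (n + 1), Fin (m t)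

/-- The index type for the `ℤ_p`-basis of `⊕_{(t,j)} ℤ_p[G/H_t]·P_{(t,j)}`. -/
abbrev BIdx (p n : ℕ) (m : Fin (n + 1) → ℕ) (G : Type) [Group G] (σ : G) : Type :=
  Σ tj : Idx n m, G ⧸ Subgroup.zpowers (σ ^ p ^ (tj.1 : ℕ))

/-- Let `p` be an odd prime, `G` cyclic of order `p ^ n` with generator
`σ`, `H_t = ⟨σ ^ p ^ t⟩`.  Let `A = ⊕ ℤ_p[G/H_u]·P_{(u,k)}` and `B = ⊕ ℤ_p[G/H_t]·P^t_{(t,j)}`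
be `ℤ_p[G]`-modules given as direct sums of free rank-one modules on the indicated
generators, and `⟨·,·⟩ : A × B → ℂ_p` a `ℤ_p`-bilinear `G`-invariant pairing.  Define
matrices over `ℂ_p[G]`:
`R_{(u,k),(t,j)} = |H_u|⁻¹ ∑_{τ ∈ G/H_u} ⟨τP_{(u,k)}, P^t_{(t,j)}⟩ τ e_{H_u}`;
`Φ = (Φ_{(t,j),(s,i)})` any matrix over `ℤ_p[G]`; and
`Λ_{(u,k),(s,i)} = |H_s|⁻¹ ∑_{(t,j)} Φ_{(t,j),(s,i)} (∑_{τ ∈ G/H_u} ⟨τP_{(u,k)}, P^t_{(t,j)}⟩ τ e_{H_u})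
 + [(u,k)=(s,i)]·(σ^{p^s} − 1)`.
Then for every character `ψ` of `G` with `ker ψ = H_{t_ψ}`:
`det ψ(Λ) = det ψ(R_{t_ψ}) · det ψ(Φ_{t_ψ}) · ∏_{s<t_ψ} (ψ(σ^{p^s}) − 1)^{m_s}`.
(`ℂ_p` is modelled as an algebraically closed field `K` with compatible `ℤ_p`- and
`ℚ_p`-algebra structures; `ψ` is extended linearly to the group algebras.) -/
theorem statement11 (p : ℕ) [Fact p.Prime] (hp2 : p ≠ 2) (n : ℕ)
    (G : Type) [CommGroup G] [Fintype G]
    (σ : G) (hσ : ∀ g : G, g ∈ Subgroup.zpowers σ) (hcard : Fintype.card G = p ^ n)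
    (m : Fin (n + 1) → ℕ)
    (K : Type) [Field K] [Algebra ℚ_[p] K] [Algebra ℤ_[p] K]
    [IsScalarTower ℤ_[p] ℚ_[p] K] [IsAlgClosed K]
    (A : Type) [AddCommGroup A] [Module (MonoidAlgebra ℤ_[p] G) A]
    [Module ℤ_[p] A] [IsScalarTower ℤ_[p] (MonoidAlgebra ℤ_[p] G) A]
    (B : Type) [AddCommGroup B] [Module (MonoidAlgebra ℤ_[p] G) B]
    [Module ℤ_[p] B] [IsScalarTower ℤ_[p] (MonoidAlgebra ℤ_[p] G) B]
    (P : Idx n m → A)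
    (bA : Module.Basis (BIdx p n m G σ) ℤ_[p] A)
    (hbA : ∀ (uk : Idx n m) (g : G),
      bA ⟨uk, QuotientGroup.mk g⟩ = MonoidAlgebra.of ℤ_[p] G g • P uk)
    (Pt : Idx n m → B)
    (bB : Module.Basis (BIdx p n m G σ) ℤ_[p] B)
    (hbB : ∀ (tj : Idx n m) (g : G),
      bB ⟨tj, QuotientGroup.mk g⟩ = MonoidAlgebra.of ℤ_[p] G g • Pt tj)
    (pair : A → B → K)
    (hpair_addl : ∀ (a a' : A) (y : B), pair (a + a') y = pair a y + pair a' y)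
    (hpair_addr : ∀ (a : A) (y y' : B), pair a (y + y') = pair a y + pair a y')
    (hpair_smull : ∀ (c : ℤ_[p]) (a : A) (y : B),
      pair (c • a) y = algebraMap ℤ_[p] K c * pair a y)
    (hpair_smulr : ∀ (c : ℤ_[p]) (a : A) (y : B),
      pair a (c • y) = algebraMap ℤ_[p] K c * pair a y)
    (hpair_inv : ∀ (g : G) (a : A) (y : B),
      pair (MonoidAlgebra.of ℤ_[p] G g • a) (MonoidAlgebra.of ℤ_[p] G g • y) = pair a y)
    (eH : Fin (n + 1) → MonoidAlgebra K G)
    (heH : ∀ u : Fin (n + 1), eH u =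
      (Fintype.card ↥(Subgroup.zpowers (σ ^ p ^ (u : ℕ))) : K)⁻¹ •
        ∑ h : ↥(Subgroup.zpowers (σ ^ p ^ (u : ℕ))), MonoidAlgebra.of K G (h : G))
    (Rmat : Idx n m → Idx n m → MonoidAlgebra K G)
    (hRmat : ∀ uk tj : Idx n m, Rmat uk tj =
      (Fintype.card ↥(Subgroup.zpowers (σ ^ p ^ (uk.1 : ℕ))) : K)⁻¹ •
        ∑ c : G ⧸ Subgroup.zpowers (σ ^ p ^ (uk.1 : ℕ)),
          pair (MonoidAlgebra.of ℤ_[p] G c.out • P uk) (Pt tj) •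
            (MonoidAlgebra.of K G c.out * eH uk.1))
    (Φmat : Idx n m → Idx n m → MonoidAlgebra ℤ_[p] G)
    (Λmat : Idx n m → Idx n m → MonoidAlgebra K G)
    (hΛmat : ∀ uk si : Idx n m, Λmat uk si =
      (Fintype.card ↥(Subgroup.zpowers (σ ^ p ^ (si.1 : ℕ))) : K)⁻¹ •
        (∑ tj : Idx n m,
          MonoidAlgebra.lift ℤ_[p] (MonoidAlgebra K G) G (MonoidAlgebra.of K G) (Φmat tj si) *
            ∑ c : G ⧸ Subgroup.zpowers (σ ^ p ^ (uk.1 : ℕ)),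
              pair (MonoidAlgebra.of ℤ_[p] G c.out • P uk) (Pt tj) •
                (MonoidAlgebra.of K G c.out * eH uk.1)) +
        (if uk = si then MonoidAlgebra.of K G (σ ^ p ^ (si.1 : ℕ)) - 1 else 0))
    (ψ : G →* K) (tψ : ℕ) (htψ : tψ ≤ n)
    (hker : ∀ g : G, ψ g = 1 ↔ g ∈ Subgroup.zpowers (σ ^ p ^ tψ)) :
    Matrix.det (Matrix.of fun uk si : Idx n m =>
        MonoidAlgebra.lift K K G ψ (Λmat uk si)) =
      Matrix.det (Matrix.of fun r c : {x : Idx n m // tψ ≤ (x.1 : ℕ)} =>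
          MonoidAlgebra.lift K K G ψ (Rmat r.1 c.1)) *
        Matrix.det (Matrix.of fun r c : {x : Idx n m // tψ ≤ (x.1 : ℕ)} =>
          MonoidAlgebra.lift ℤ_[p] K G ψ (Φmat r.1 c.1)) *
        ∏ s : Fin (n + 1), if (s : ℕ) < tψ then (ψ (σ ^ p ^ (s : ℕ)) - 1) ^ m s else 1 := by
    classical
  haveI : CharZero K := charZero_of_injective_algebraMap (algebraMap ℚ_[p] K).injective
  have hp1 : 1 < p := (Fact.out : p.Prime).one_lt
  have horder : orderOf σ = p ^ n := by
    rw [orderOf_eq_card_of_forall_mem_zpowers hσ, Nat.card_eq_fintype_card, hcard]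
  -- membership facts
  have hmemle : ∀ u : ℕ, tψ ≤ u → σ ^ p ^ u ∈ Subgroup.zpowers (σ ^ p ^ tψ) := by
    intro u hu
    refine ⟨(p ^ (u - tψ) : ℕ), ?_⟩
    show (σ ^ p ^ tψ) ^ ((p ^ (u - tψ) : ℕ) : ℤ) = σ ^ p ^ u
    rw [zpow_natCast, ← pow_mul, ← pow_add, Nat.add_sub_cancel' hu]
  have hnotmem : ∀ u : ℕ, u < tψ → σ ^ p ^ u ∉ Subgroup.zpowers (σ ^ p ^ tψ) := by
    intro u hu hmem
    obtain ⟨k, hk⟩ := hmem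
    have hk' : σ ^ (((p ^ tψ : ℕ) : ℤ) * k) = σ ^ (((p ^ u : ℕ)) : ℤ) := by
      rw [zpow_mul, zpow_natCast, zpow_natCast]; exact hk
    have hdvd : ((orderOf σ : ℤ)) ∣ ((p ^ tψ : ℕ) : ℤ) * k - ((p ^ u : ℕ) : ℤ) :=
      orderOf_dvd_iff_zpow_eq_one.mpr (by rw [zpow_sub, hk']; simp)
    have hdvd' : ((p ^ tψ : ℕ) : ℤ) ∣ (orderOf σ : ℤ) := by
      rw [horder]; exact_mod_cast pow_dvd_pow p htψ
    have h2 : ((p ^ tψ : ℕ) : ℤ) ∣ ((p ^ u : ℕ) : ℤ) := by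
      have := dvd_sub (dvd_mul_right ((p ^ tψ : ℕ) : ℤ) k) (hdvd'.trans hdvd)
      simpa using this
    have h3 : p ^ tψ ∣ p ^ u := Int.natCast_dvd_natCast.mp h2
    exact absurd ((Nat.pow_dvd_pow_iff_le_right hp1).mp h3) (by omega)
  have hψ_one : ∀ g : G, g ∈ Subgroup.zpowers (σ ^ p ^ tψ) → ψ g = 1 :=
    fun g hg => (hker g).mpr hg
  have hψ_oneH : ∀ u : Fin (n + 1), tψ ≤ (u : ℕ) →
      ∀ g ∈ Subgroup.zpowers (σ ^ p ^ (u : ℕ)), ψ g = 1 := by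
    intro u hu g hg
    exact hψ_one g (Subgroup.zpowers_le.mpr (hmemle _ hu) hg)
  have hψ_ne : ∀ u : ℕ, u < tψ → ψ (σ ^ p ^ u) ≠ 1 := by
    intro u hu h
    exact hnotmem u hu ((hker _).mp h)
  -- cardinalities
  set cH : Fin (n + 1) → K :=
    fun u => (Fintype.card ↥(Subgroup.zpowers (σ ^ p ^ (u : ℕ))) : K) with hcH
  have hcHne : ∀ u, cH u ≠ 0 := by
    intro u
    exact Nat.cast_ne_zero.mpr Fintype.card_ne_zero
  set χ : MonoidAlgebra K G →ₐ[K] K := MonoidAlgebra.lift K K G ψ with hχdef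
  set χΦ : MonoidAlgebra ℤ_[p] G →ₐ[ℤ_[p]] K := MonoidAlgebra.lift ℤ_[p] K G ψ with hχΦdef
  -- character value on idempotents
  have hχeH : ∀ u : Fin (n + 1), χ (eH u) = if tψ ≤ (u : ℕ) then 1 else 0 := by
    intro u
    rw [heH u, map_smul, map_sum]
    simp only [hχdef, MonoidAlgebra.lift_of, smul_eq_mul]
    by_cases hu : tψ ≤ (u : ℕ)
    · rw [if_pos hu]
      rw [Finset.sum_congr rfl fun h _ => hψ_oneH u hu h.1 h.2]
      simp only [Finset.sum_const, Finset.card_univ, nsmul_eq_mul, mul_one]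
      exact inv_mul_cancel₀ (hcHne u)
    · rw [if_neg hu]
      have hz : ∑ h : ↥(Subgroup.zpowers (σ ^ p ^ (u : ℕ))), ψ (h : G) = 0 := by
        refine sum_eq_zero_of_twist
          (Equiv.mulLeft (⟨σ ^ p ^ (u : ℕ), Subgroup.mem_zpowers _⟩ :
            ↥(Subgroup.zpowers (σ ^ p ^ (u : ℕ))))) (ψ (σ ^ p ^ (u : ℕ)))
          (hψ_ne _ (by omega)) _ ?_
        intro x
        simp [map_mul]
      rw [hz, mul_zero]
  -- basis facts
  have hPq : ∀ (uk : Idx n m) (g : G),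
      MonoidAlgebra.of ℤ_[p] G g • P uk = bA ⟨uk, QuotientGroup.mk g⟩ :=
    fun uk g => (hbA uk g).symm
  have hPtq : ∀ (tj : Idx n m) (g : G),
      MonoidAlgebra.of ℤ_[p] G g • Pt tj = bB ⟨tj, QuotientGroup.mk g⟩ :=
    fun tj g => (hbB tj g).symm
  have hPtfix : ∀ (tj : Idx n m) (h : G), h ∈ Subgroup.zpowers (σ ^ p ^ (tj.1 : ℕ)) →
      MonoidAlgebra.of ℤ_[p] G h • Pt tj = Pt tj := by
    intro tj h hh
    have h1 : (QuotientGroup.mk h : G ⧸ Subgroup.zpowers (σ ^ p ^ (tj.1 : ℕ)))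
        = QuotientGroup.mk 1 := by
      rw [QuotientGroup.eq]
      simpa using Subgroup.inv_mem _ hh
    rw [hPtq tj h, h1, ← hPtq tj 1, map_one, one_smul]
  -- the key sums
  set S : Idx n m → Idx n m → K := fun uk tj =>
    ∑ c : G ⧸ Subgroup.zpowers (σ ^ p ^ (uk.1 : ℕ)),
      pair (MonoidAlgebra.of ℤ_[p] G c.out • P uk) (Pt tj) * ψ c.out with hSdef
  -- key vanishing lemma
  have hS0 : ∀ uk tj : Idx n m, tψ ≤ (uk.1 : ℕ) → (tj.1 : ℕ) < tψ → S uk tj = 0 := by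
    intro uk tj hu ht
    set h₀ : G := σ ^ p ^ (tj.1 : ℕ) with hh₀
    refine sum_eq_zero_of_twist (MulAction.toPerm h₀) (ψ h₀) (hψ_ne _ ht) _ ?_
    intro x
    simp only [MulAction.toPerm_apply]
    set g : G := x.out with hg
    set g' : G := (h₀ • x).out with hg'
    have hq : (QuotientGroup.mk g' : G ⧸ Subgroup.zpowers (σ ^ p ^ (uk.1 : ℕ)))
        = QuotientGroup.mk (h₀ * g) := by
      rw [hg', QuotientGroup.out_eq', hg, ← smul_eq_mul, ← MulAction.Quotient.smul_mk,
        QuotientGroup.out_eq']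
    -- ψ g' = ψ h₀ * ψ g
    obtain ⟨w, hw, hww⟩ : ∃ w ∈ Subgroup.zpowers (σ ^ p ^ (uk.1 : ℕ)), g' = (h₀ * g) * w := by
      have := QuotientGroup.eq.mp hq.symm
      exact ⟨(h₀ * g)⁻¹ * g', this, by group⟩
    have hψg' : ψ g' = ψ h₀ * ψ g := by
      rw [hww, map_mul, map_mul, hψ_oneH uk.1 hu w hw, mul_one]
    -- pair (of g' • P uk) (Pt tj) = pair (of g • P uk) (Pt tj)
    have hpair' : pair (MonoidAlgebra.of ℤ_[p] G g' • P uk) (Pt tj)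
        = pair (MonoidAlgebra.of ℤ_[p] G g • P uk) (Pt tj) := by
      rw [hPq uk g', hq, ← hPq uk (h₀ * g)]
      have h2 : MonoidAlgebra.of ℤ_[p] G (h₀ * g) • P uk
          = MonoidAlgebra.of ℤ_[p] G h₀ • (MonoidAlgebra.of ℤ_[p] G g • P uk) := by
        rw [map_mul, mul_smul]
      rw [h2]
      conv_lhs => rw [← hPtfix tj h₀ (Subgroup.mem_zpowers _)]
      exact hpair_inv h₀ _ _
    rw [hpair', hψg']
    ring
  -- χ applied to R entries
  have hχR : ∀ uk tj : Idx n m,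
      χ (Rmat uk tj) = (cH uk.1)⁻¹ * (S uk tj * χ (eH uk.1)) := by
    intro uk tj
    rw [hRmat, map_smul, map_sum, smul_eq_mul]
    congr 1
    rw [hSdef, Finset.sum_mul]
    refine Finset.sum_congr rfl fun c _ => ?_
    rw [map_smul, map_mul, smul_eq_mul]
    simp only [hχdef, MonoidAlgebra.lift_of]
    ring
  -- χ of the composite lift
  have hcomp : ∀ x : MonoidAlgebra ℤ_[p] G,
      χ (MonoidAlgebra.lift ℤ_[p] (MonoidAlgebra K G) G (MonoidAlgebra.of K G) x) = χΦ x := by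
    intro x
    induction x using MonoidAlgebra.induction_linear with
    | zero => simp
    | add f g hf hg => rw [map_add, map_add, map_add, hf, hg]
    | single a b =>
      rw [MonoidAlgebra.lift_single, MonoidAlgebra.lift_single]
      rw [← algebraMap_smul K b (MonoidAlgebra.of K G a), map_smul]
      simp only [hχdef, MonoidAlgebra.lift_of, smul_eq_mul]
      rw [Algebra.smul_def]
  -- χ applied to Λ entries
  have hχΛ : ∀ uk si : Idx n m,
      χ (Λmat uk si) = (cH si.1)⁻¹ * ((∑ tj : Idx n m, χΦ (Φmat tj si) * S uk tj) * χ (eH uk.1))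
        + (if uk = si then ψ (σ ^ p ^ (si.1 : ℕ)) - 1 else 0) := by
    intro uk si
    rw [hΛmat, map_add, map_smul, smul_eq_mul]
    congr 1
    · congr 1
      rw [map_sum, Finset.sum_mul]
      refine Finset.sum_congr rfl fun tj _ => ?_
      rw [map_mul, hcomp, map_sum, mul_assoc]
      congr 1
      rw [hSdef, Finset.sum_mul]
      refine Finset.sum_congr rfl fun c _ => ?_
      rw [map_smul, map_mul, smul_eq_mul]
      simp only [hχdef, MonoidAlgebra.lift_of]
      ring
    · split_ifs with h
      · rw [map_sub, map_one]
        simp [hχdef]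
      · exact map_zero _
    -- the full matrix
  set Mfull : Matrix (Idx n m) (Idx n m) K :=
    Matrix.of (fun uk si : Idx n m => χ (Λmat uk si)) with hMfull
  set T := {x : Idx n m // tψ ≤ (x.1 : ℕ)} with hT
  set Rsub : Matrix T T K := Matrix.of (fun r c : T => χ (Rmat r.1 c.1)) with hRsubdef
  set Φsub : Matrix T T K := Matrix.of (fun r c : T => χΦ (Φmat r.1 c.1)) with hΦsubdef
  have hψpow : ∀ u : Fin (n + 1), tψ ≤ (u : ℕ) → ψ (σ ^ p ^ (u : ℕ)) = 1 :=
    fun u hu => hψ_one _ (hmemle _ hu)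
  have hoff : ∀ i : Idx n m, ¬ tψ ≤ (i.1 : ℕ) → ∀ j : Idx n m, tψ ≤ (j.1 : ℕ) →
      Mfull i j = 0 := by
    intro i hi j hj
    rw [hMfull, Matrix.of_apply, hχΛ, hχeH, if_neg hi,
      if_neg (fun h : i = j => hi (by rw [h]; exact hj))]
    ring
  have hdiag : Mfull.toSquareBlockProp (fun x : Idx n m => ¬ tψ ≤ (x.1 : ℕ)) =
      Matrix.diagonal (fun i : {x : Idx n m // ¬ tψ ≤ (x.1 : ℕ)} =>
        ψ (σ ^ p ^ ((i : Idx n m).1 : ℕ)) - 1) := by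
    ext i j
    rw [Matrix.toSquareBlockProp_def, Matrix.of_apply, hMfull, Matrix.of_apply, hχΛ, hχeH,
      if_neg i.2, Matrix.diagonal_apply]
    by_cases h : i = j
    · subst h
      rw [if_pos rfl, if_pos rfl]
      ring
    · rw [if_neg (fun hh => h (Subtype.ext hh)), if_neg h]
      ring
  have hTblock : Mfull.toSquareBlockProp (fun x : Idx n m => tψ ≤ (x.1 : ℕ))
      = Matrix.diagonal (fun r : T => cH r.1.1) * (Rsub * Φsub) *
        Matrix.diagonal (fun r : T => (cH r.1.1)⁻¹) := by
    ext i j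
    have hsum : (∑ tj : Idx n m, χΦ (Φmat tj j.1) * S i.1 tj)
        = ∑ tj : T, χΦ (Φmat tj.1 j.1) * S i.1 tj.1 := by
      calc ∑ tj : Idx n m, χΦ (Φmat tj j.1) * S i.1 tj
          = ∑ tj : Idx n m, (if tψ ≤ (tj.1 : ℕ) then χΦ (Φmat tj j.1) * S i.1 tj else 0) := by
            refine Finset.sum_congr rfl fun tj _ => ?_
            by_cases h : tψ ≤ (tj.1 : ℕ)
            · rw [if_pos h]
            · rw [if_neg h, hS0 i.1 tj i.2 (by omega), mul_zero]
        _ = ∑ tj ∈ Finset.univ.filter (fun x : Idx n m => tψ ≤ (x.1 : ℕ)),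
              χΦ (Φmat tj j.1) * S i.1 tj := (Finset.sum_filter _ _).symm
        _ = ∑ tj : T, χΦ (Φmat tj.1 j.1) * S i.1 tj.1 :=
              Finset.sum_subtype _ (by simp) _
    have hite : (if (i : Idx n m) = (j : Idx n m)
        then ψ (σ ^ p ^ (((j : Idx n m)).1 : ℕ)) - 1 else 0) = 0 := by
      split_ifs with h
      · rw [hψpow _ j.2, sub_self]
      · rfl
    have hRHSsum : (∑ k : T, Rsub i k * Φsub k j)
        = (cH i.1.1)⁻¹ * ∑ tj : T, χΦ (Φmat tj.1 j.1) * S i.1 tj.1 := by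
      rw [Finset.mul_sum]
      refine Finset.sum_congr rfl fun k _ => ?_
      rw [hRsubdef, hΦsubdef, Matrix.of_apply, Matrix.of_apply, hχR, hχeH, if_pos i.2, mul_one]
      ring
    rw [Matrix.toSquareBlockProp_def, Matrix.of_apply, hMfull, Matrix.of_apply, hχΛ,
      Matrix.mul_diagonal, Matrix.diagonal_mul, Matrix.mul_apply, hχeH, if_pos i.2,
      mul_one, hite, add_zero, hsum, hRHSsum, ← mul_assoc,
      mul_inv_cancel₀ (hcHne i.1.1), one_mul, mul_comm]
  have hprod : (∏ i : {x : Idx n m // ¬ tψ ≤ (x.1 : ℕ)},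
        (ψ (σ ^ p ^ ((i : Idx n m).1 : ℕ)) - 1))
      = ∏ s : Fin (n + 1), if (s : ℕ) < tψ then (ψ (σ ^ p ^ (s : ℕ)) - 1) ^ m s else 1 := by
    rw [← Finset.prod_subtype (Finset.univ.filter fun x : Idx n m => ¬ tψ ≤ (x.1 : ℕ))
      (by simp) (fun x : Idx n m => ψ (σ ^ p ^ (x.1 : ℕ)) - 1), Finset.prod_filter,
      ← Finset.univ_sigma_univ, Finset.prod_sigma]
    refine Finset.prod_congr rfl fun t _ => ?_
    show (∏ _j : Fin (m t), if ¬ tψ ≤ (t : ℕ) then ψ (σ ^ p ^ (t : ℕ)) - 1 else 1) = _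
    rw [Finset.prod_const, Finset.card_univ, Fintype.card_fin]
    by_cases h : (t : ℕ) < tψ
    · rw [if_pos (by omega : ¬ tψ ≤ (t : ℕ)), if_pos h]
    · rw [if_neg (by omega : ¬ ¬ tψ ≤ (t : ℕ)), if_neg h, one_pow]
  calc Mfull.det
      = (Mfull.toSquareBlockProp (fun x : Idx n m => tψ ≤ (x.1 : ℕ))).det *
        (Mfull.toSquareBlockProp (fun x : Idx n m => ¬ tψ ≤ (x.1 : ℕ))).det :=
        Matrix.twoBlockTriangular_det Mfull _ hoff
    _ = Rsub.det * Φsub.det *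
        ∏ s : Fin (n + 1), if (s : ℕ) < tψ then (ψ (σ ^ p ^ (s : ℕ)) - 1) ^ m s else 1 := by
        rw [hTblock, hdiag, Matrix.det_mul, Matrix.det_mul, Matrix.det_mul,
          Matrix.det_diagonal, Matrix.det_diagonal, Matrix.det_diagonal, hprod]
        have hone : (∏ r : T, cH r.1.1) * (∏ r : T, (cH r.1.1)⁻¹) = 1 := by
          rw [← Finset.prod_mul_distrib]
          exact Finset.prod_eq_one fun r _ => mul_inv_cancel₀ (hcHne _)
        linear_combination (Rsub.det * Φsub.det *
          (∏ s : Fin (n + 1), if (s : ℕ) < tψ then (ψ (σ ^ p ^ (s : ℕ)) - 1) ^ m s else 1)) * hone
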